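/- For all integers n ≥ 1, |E(n) - α^n| < 2·α^(-n/2), where α is the real root of x^3 - x - 1. -/

import Mathlib

def perrin : ℕ → ℕ
  | 0 => 3
  | 1 => 0
  | 2 => 2
  | n + 3 => perrin (n + 1) + perrin n

/-- Coefficients of `α ^ m` in the basis `1, α, α²` where `α³ = α + 1`. -/
def pcoef : ℕ → ℤ × ℤ × ℤ
  | 0 => (1, 0, 0)
  | n + 1 => ((pcoef n).2.2, (pcoef n).1 + (pcoef n).2.2, (pcoef n).2.1)

lemma pcoef_pow (α : ℝ) (hroot : α ^ 3 = α + 1) :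
    ∀ m : ℕ, α ^ m = ((pcoef m).1 : ℝ) + (pcoef m).2.1 * α + (pcoef m).2.2 * α ^ 2 := by
  intro m
  induction m with
  | zero => simp [pcoef]
  | succ n ih =>
    have h : α ^ (n + 1) = α ^ n * α := by ring
    rw [h, ih]
    simp only [pcoef]
    push_cast
    linear_combination ((pcoef n).2.2 : ℝ) * hroot

lemma pcoef_w_rec (k : ℕ) :
    (pcoef (k + 3)).2.2 = (pcoef (k + 1)).2.2 + (pcoef k).2.2 := by
  simp [pcoef]; ring

lemma pcoef_w_pos : ∀ m, 1 ≤ (pcoef (m + 4)).2.2 := by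
  have key : ∀ m, 1 ≤ (pcoef (m + 4)).2.2 ∧ 1 ≤ (pcoef (m + 5)).2.2 ∧ 1 ≤ (pcoef (m + 6)).2.2 := by
    intro m
    induction m with
    | zero => norm_num [pcoef]
    | succ n ih =>
      refine ⟨ih.2.1, ih.2.2, ?_⟩
      have h : (pcoef (n + 7)).2.2 = (pcoef (n + 5)).2.2 + (pcoef (n + 4)).2.2 :=
        pcoef_w_rec (n + 4)
      have h1 := ih.1
      have h2 := ih.2.1
      show 1 ≤ (pcoef (n + 7)).2.2
      omega
  exact fun m => (key m).1

lemma pcoef2 : pcoef 2 = (0, 0, 1) := rfl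

/-- The cubic `x³ = x + 1` has no rational root. -/
lemma no_rat_root (r : ℚ) : r ^ 3 ≠ r + 1 := by
  intro h
  have hqQ : ((r.den : ℚ)) ≠ 0 := by
    exact_mod_cast r.den_ne_zero
  have hr : (r.num : ℚ) = r * (r.den : ℚ) := (div_eq_iff hqQ).mp (Rat.num_div_den r)
  have key : r.num ^ 3 = r.num * (r.den : ℤ) ^ 2 + (r.den : ℤ) ^ 3 := by
    have h' : (r.num : ℚ) ^ 3 = (r.num : ℚ) * (r.den : ℚ) ^ 2 + (r.den : ℚ) ^ 3 := by
      linear_combination ((r.num:ℚ)^2 + (r.num:ℚ) * r * (r.den:ℚ) + r^2 * (r.den:ℚ)^2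
        - (r.den:ℚ)^2) * hr + (r.den:ℚ)^3 * h
    exact_mod_cast h'
  have hdvd : (r.den : ℤ) ∣ r.num ^ 3 :=
    ⟨r.num * (r.den:ℤ) + (r.den:ℤ)^2, by linear_combination key⟩
  have hcop : IsCoprime (r.num) ((r.den : ℤ)) := by
    rw [Int.isCoprime_iff_gcd_eq_one]
    exact_mod_cast r.reduced
  have hunit : IsUnit ((r.den : ℤ)) := (hcop.symm.pow_right).isUnit_of_dvd hdvd
  have hd1 : (r.den : ℤ) = 1 := by
    rcases Int.isUnit_iff.mp hunit with h1 | h1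
    · exact h1
    · exfalso; have : (0:ℤ) < (r.den : ℤ) := by exact_mod_cast r.pos
      omega
  rw [hd1] at key
  have hnu : r.num ∣ 1 := ⟨r.num ^ 2 - 1, by linear_combination -key⟩
  rcases Int.isUnit_iff.mp (isUnit_of_dvd_one hnu) with h1 | h1 <;> rw [h1] at key <;> omega

/-- `α` satisfies no monic quadratic with rational coefficients. -/
lemma quad_ne (α : ℝ) (hroot : α ^ 3 = α + 1) (hα : 1 < α) (b c : ℚ) :
    α ^ 2 + (b : ℝ) * α + (c : ℝ) ≠ 0 := by
  intro h
  have hrem : ((b:ℝ)^2 - (c:ℝ) - 1) * α = 1 - (b:ℝ) * (c:ℝ) := by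
    linear_combination hroot - (α - (b:ℝ)) * h
  by_cases hb : b ^ 2 - c - 1 = 0
  · have hbR : (b:ℝ)^2 - (c:ℝ) - 1 = 0 := by exact_mod_cast congrArg (Rat.cast (K := ℝ)) hb
    rw [hbR, zero_mul] at hrem
    have hbc : b * c = 1 := by
      have : (b:ℝ) * (c:ℝ) = 1 := by linarith
      exact_mod_cast this
    have hc : c = b ^ 2 - 1 := by linarith [hb]
    apply no_rat_root b
    linear_combination hbc - b * hc
  · set r : ℚ := (1 - b * c) / (b ^ 2 - c - 1) with hrdef
    have hbR : ((b ^ 2 - c - 1 : ℚ) : ℝ) ≠ 0 := by exact_mod_cast hb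
    have hαr : α = (r : ℝ) := by
      rw [hrdef]
      push_cast
      rw [eq_div_iff (by push_cast at hbR; exact hbR)]
      linear_combination hrem
    apply no_rat_root r
    have : (r:ℝ) ^ 3 = (r:ℝ) + 1 := by rw [← hαr]; exact hroot
    exact_mod_cast this

noncomputable def pe (α : ℝ) (n : ℕ) : ℝ := (perrin n : ℝ) - α ^ n

lemma pe_def (α : ℝ) (n : ℕ) : pe α n = (perrin n : ℝ) - α ^ n := rfl

lemma pe_rec3 (α : ℝ) (n : ℕ) :
    pe α (n + 3) = pe α (n + 1) + pe α n + (α ^ (n+1) + α ^ n - α ^ (n+3)) := by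
  simp only [pe, perrin]
  push_cast
  ring

lemma pe_rec3' (α : ℝ) (hroot : α ^ 3 = α + 1) (n : ℕ) :
    pe α (n + 3) = pe α (n + 1) + pe α n := by
  rw [pe_rec3]
  have : α ^ (n + 3) = α ^ (n+1) + α ^ n := by
    have : α ^ (n+3) = α ^ n * α ^ 3 := by ring
    rw [this, hroot]; ring
  rw [this]; ring

lemma pe_rec2 (α : ℝ) (hroot : α ^ 3 = α + 1) (hα : 1 < α) :
    ∀ n, pe α (n + 2) = -α * pe α (n + 1) - pe α n / α := by
  have h0 : α ≠ 0 := by positivity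
  intro n
  induction n with
  | zero =>
    simp only [pe, perrin]
    norm_num
    field_simp
    linear_combination (-2) * hroot
  | succ n ih =>
    rw [pe_rec3' α hroot, ih]
    field_simp
    linear_combination (-1) * pe α (n + 1) * hroot

noncomputable def pq (α : ℝ) (n : ℕ) : ℝ :=
  pe α (n + 1) ^ 2 + α * pe α (n + 1) * pe α n + pe α n ^ 2 / α

lemma pq_def (α : ℝ) (n : ℕ) : pq α n =
    pe α (n + 1) ^ 2 + α * pe α (n + 1) * pe α n + pe α n ^ 2 / α := rfl

lemma pq_succ (α : ℝ) (hroot : α ^ 3 = α + 1) (hα : 1 < α) (n : ℕ) :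
    pq α (n + 1) = pq α n / α := by
  have h0 : α ≠ 0 := by positivity
  simp only [pq]
  rw [show n + 1 + 1 = n + 2 from rfl, pe_rec2 α hroot hα n]
  field_simp
  ring

lemma pq_formula (α : ℝ) (hroot : α ^ 3 = α + 1) (hα : 1 < α) (n : ℕ) :
    pq α n = (3 - α) / α ^ (n + 1) := by
  have h0 : α ≠ 0 := by positivity
  induction n with
  | zero =>
    simp only [pq, pe, perrin]
    norm_num
    field_simp
    linear_combination (-1) * hroot
  | succ n ih =>
    rw [pq_succ α hroot hα n, ih]
    rw [div_div]
    ring_nf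

lemma s_ne (α : ℝ) (hroot : α ^ 3 = α + 1) (hα : 1 < α) (n : ℕ) (hn : 1 ≤ n) :
    2 * pe α (n + 1) + α * pe α n ≠ 0 := by
  intro hs
  have hα0 : (0:ℝ) < α := by linarith
  rw [pe_def, pe_def] at hs
  have hexp : 2 * (perrin (n+1) : ℝ) + α * (perrin n : ℝ) = 3 * α ^ (n+1) := by
    linear_combination hs
  by_cases h2 : n = 2
  · subst h2
    have hp3 : perrin 3 = 3 := rfl
    have hp2 : perrin 2 = 2 := rfl
    rw [hp3, hp2] at hexp
    push_cast at hexp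
    have hα3 : α = 3 := by linear_combination -hexp - 3 * hroot
    rw [hα3] at hroot; norm_num at hroot
  · have hw : 1 ≤ (pcoef (n + 1)).2.2 := by
      rcases n with _ | _ | _ | k
      · omega
      · rw [pcoef2]
      · exact absurd rfl h2
      · exact pcoef_w_pos k
    set u := (pcoef (n + 1)).1 with hu
    set v := (pcoef (n + 1)).2.1 with hv
    set w := (pcoef (n + 1)).2.2 with hwdef
    have hpow := pcoef_pow α hroot (n + 1)
    have hwR : ((3 * w : ℤ) : ℝ) ≠ 0 := by
      have : (0:ℤ) < 3 * w := by omega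
      positivity
    set b : ℚ := ((3 * v - (perrin n : ℤ) : ℤ) : ℚ) / ((3 * w : ℤ) : ℚ) with hb
    set c : ℚ := ((3 * u - 2 * (perrin (n+1) : ℤ) : ℤ) : ℚ) / ((3 * w : ℤ) : ℚ) with hc
    have key : ((3 * w : ℤ) : ℝ) * α ^ 2 + ((3 * v - (perrin n : ℤ) : ℤ) : ℝ) * α
        + ((3 * u - 2 * (perrin (n+1) : ℤ) : ℤ) : ℝ) = 0 := by
      push_cast
      linear_combination (-3 : ℝ) * hpow - hexp
    apply quad_ne α hroot hα b c
    rw [hb, hc]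
    push_cast
    push_cast at key hwR
    field_simp
    linear_combination key

lemma alpha_lt (α : ℝ) (hroot : α ^ 3 = α + 1) (hα : 1 < α) : α < 3 := by
  nlinarith [hroot, hα, sq_nonneg α, sq_nonneg (α - 1)]

lemma pe_sq_lt (α : ℝ) (hroot : α ^ 3 = α + 1) (hα : 1 < α) (n : ℕ) (hn : 1 ≤ n) :
    pe α n ^ 2 < 4 / α ^ n := by
  have hα0 : (0:ℝ) < α := by linarith
  have h0 : α ≠ 0 := ne_of_gt hα0
  have hk : 0 < 3 - α := by have := alpha_lt α hroot hα; linarith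
  have hs := s_ne α hroot hα n hn
  set s := 2 * pe α (n + 1) + α * pe α n with hsdef
  have hs2 : 0 < s ^ 2 := lt_of_le_of_ne (sq_nonneg s) (Ne.symm (pow_ne_zero 2 hs))
  have hid : (3 - α) * pe α n ^ 2 = 4 * α * pq α n - α * s ^ 2 := by
    rw [pq_def, hsdef]
    field_simp
    linear_combination pe α n ^ 2 * hroot
  have h4 : 4 * α * pq α n = 4 * (3 - α) / α ^ n := by
    rw [pq_formula α hroot hα n]
    field_simp
    ring
  rw [h4] at hid
  have h1 : (3 - α) * pe α n ^ 2 < (3 - α) * (4 / α ^ n) := by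
    rw [hid]
    have he : (3 - α) * (4 / α ^ n) = 4 * (3 - α) / α ^ n := by ring
    rw [he]
    exact sub_lt_self _ (mul_pos hα0 hs2)
  exact lt_of_mul_lt_mul_left (by linarith [h1]) (le_of_lt hk)

theorem perrin_binet_error (α : ℝ) (hroot : α ^ 3 = α + 1) (hα : 1 < α) :
    ∀ n : ℕ, 1 ≤ n →
      |(perrin n : ℝ) - α ^ n| < 2 * α ^ (-(n : ℝ) / 2) := by
  intro n hn
  have hα0 : (0:ℝ) < α := by linarith
  have key := pe_sq_lt α hroot hα n hn
  rw [pe_def] at key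
  have hRnn : (0:ℝ) ≤ 2 * α ^ (-(n : ℝ) / 2) := by positivity
  apply lt_of_pow_lt_pow_left₀ 2 hRnn
  have h1 : α ^ (-(n:ℝ)/2) * α ^ (-(n:ℝ)/2) = α ^ (-(n:ℝ)) := by
    rw [← Real.rpow_add hα0]; norm_num
  have h2 : α ^ (-(n:ℝ)) = (α ^ n)⁻¹ := by
    rw [Real.rpow_neg hα0.le, Real.rpow_natCast]
  have h3 : (α ^ (-(n:ℝ)/2)) ^ 2 = (α ^ n)⁻¹ := by
    rw [sq, h1, h2]
  have hsq : (2 * α ^ (-(n : ℝ) / 2)) ^ 2 = 4 / α ^ n := by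
    rw [mul_pow, h3, div_eq_mul_inv]
    norm_num
  rw [hsq, sq_abs]
  exact key
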